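/- In the symmetric group Σ_p (p prime), the normalizer of a Sylow p-subgroup S has order p(p−1); equivalently, the Weyl group N_{Σ_p}(S)/S has order p−1. -/

import Mathlib

open Equiv Equiv.Perm Subgroup

lemma aux_cycle {p : ℕ} [hp : Fact p.Prime] {σ : Equiv.Perm (Fin p)}
    (h : orderOf σ = p) : σ.IsCycle ∧ σ.support = Finset.univ := by
  have hcard : Fintype.card (Fin p) = p := Fintype.card_fin p
  have hc : σ.IsCycle :=
    Equiv.Perm.isCycle_of_prime_order'' (by rw [hcard]; exact hp.out) (by rw [hcard, h])
  refine ⟨hc, Finset.eq_univ_of_card _ ?_⟩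
  rw [← hc.orderOf, h, hcard]

lemma aux_zpowers {p : ℕ} [hp : Fact p.Prime] {σ τ : Equiv.Perm (Fin p)}
    (hc : σ.IsCycle) (hs : σ.support = Finset.univ) (hcomm : Commute τ σ) :
    τ ∈ Subgroup.zpowers σ := by
  have hp2 : 0 < p := hp.out.pos
  let x0 : Fin p := ⟨0, hp2⟩
  have hmem : ∀ y : Fin p, σ y ≠ y := fun y =>
    Equiv.Perm.mem_support.mp (hs ▸ Finset.mem_univ y)
  obtain ⟨x, hx, hall⟩ := hc
  obtain ⟨k, hk⟩ := (hall (hmem x0)).symm.trans (hall (hmem (τ x0)))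
  refine Subgroup.mem_zpowers_iff.mpr ⟨k, ?_⟩
  ext y
  refine congrArg Fin.val ?_
  obtain ⟨n, hn⟩ := (hall (hmem x0)).symm.trans (hall (hmem y))
  have hcn : Commute τ (σ ^ n) := hcomm.zpow_right n
  calc (σ ^ k) y = (σ ^ k) ((σ ^ n) x0) := by rw [hn]
    _ = (σ ^ n) ((σ ^ k) x0) := by
        rw [← Equiv.Perm.mul_apply, ← Equiv.Perm.mul_apply,
          ((Commute.refl σ).zpow_zpow k n).eq]
    _ = (σ ^ n) (τ x0) := by rw [hk]
    _ = τ ((σ ^ n) x0) := by rw [← Equiv.Perm.mul_apply, ← Equiv.Perm.mul_apply, hcn.eq]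
    _ = τ y := by rw [hn]

theorem stmt13 (p : ℕ) [Fact p.Prime] (S : Sylow p (Equiv.Perm (Fin p))) :
    Nat.card (Subgroup.normalizer ((S : Subgroup (Equiv.Perm (Fin p))) : Set (Equiv.Perm (Fin p)))) = p * (p - 1) ∧
      Nat.card ((Subgroup.normalizer ((S : Subgroup (Equiv.Perm (Fin p))) : Set (Equiv.Perm (Fin p)))) ⧸
        (S : Subgroup (Equiv.Perm (Fin p))).subgroupOf
          (Subgroup.normalizer ((S : Subgroup (Equiv.Perm (Fin p))) : Set (Equiv.Perm (Fin p))))) = p - 1 := by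
  have hp : Fact p.Prime := inferInstance
  set H : Subgroup (Equiv.Perm (Fin p)) := (S : Subgroup (Equiv.Perm (Fin p))) with hH
  -- card of the ambient group
  have hG : Nat.card (Equiv.Perm (Fin p)) = Nat.factorial p := by
    rw [Nat.card_eq_fintype_card, Fintype.card_perm, Fintype.card_fin]
  have hfac : (Nat.factorial p).factorization p = 1 := by
    rw [← Nat.mul_factorial_pred hp.out.ne_zero,
      Nat.factorization_mul hp.out.pos.ne' (Nat.factorial_ne_zero _)]
    simp [Nat.Prime.factorization_self hp.out,
      Nat.factorization_factorial_eq_zero_of_lt (Nat.sub_lt hp.out.pos one_pos)]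
  have hScard : Nat.card H = p := by
    rw [hH, S.card_eq_multiplicity, hG, hfac, pow_one]
  have hcyc : IsCyclic H := isCyclic_of_prime_card hScard
  obtain ⟨g, hg⟩ := hcyc.exists_generator
  set σ : Equiv.Perm (Fin p) := (g : Equiv.Perm (Fin p)) with hσdef
  have horderσ : orderOf σ = p := by
    rw [hσdef, orderOf_submonoid, orderOf_eq_card_of_forall_mem_zpowers hg, hScard]
  have hzp : ∀ x : Equiv.Perm (Fin p), x ∈ H → orderOf x = p → Subgroup.zpowers x = H :=
    fun x hx hox => Subgroup.eq_of_le_of_card_ge (Subgroup.zpowers_le.mpr hx)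
      (le_of_eq (by rw [Nat.card_zpowers, hox, hScard]))
  have hcycσ := aux_cycle horderσ
  have hcent : Subgroup.centralizer (H : Set (Equiv.Perm (Fin p))) = H := by
    apply le_antisymm
    · intro τ hτ
      have hcm : Commute σ τ := Subgroup.mem_centralizer_iff.mp hτ σ g.2
      rw [← hzp σ g.2 horderσ]
      exact aux_zpowers hcycσ.1 hcycσ.2 hcm.symm
    · rw [← hzp σ g.2 horderσ]
      exact Subgroup.le_centralizer _
  set f := H.normalizerMonoidHom with hf
  have hker : f.ker = H.subgroupOf (normalizer (H : Set (Equiv.Perm (Fin p)))) := by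
    rw [hf, Subgroup.normalizerMonoidHom_ker, hcent]
  have hsurj : Function.Surjective f := by
    intro φ
    set σ' : Equiv.Perm (Fin p) := ((φ g : H) : Equiv.Perm (Fin p)) with hσ'def
    have horderσ' : orderOf σ' = p := by
      rw [hσ'def, orderOf_submonoid, φ.orderOf_eq g,
        orderOf_eq_card_of_forall_mem_zpowers hg, hScard]
    have hcycσ' := aux_cycle horderσ'
    have hσ'H : σ' ∈ H := (φ g).2
    have hconj : IsConj σ σ' := Equiv.Perm.isConj_of_cycleType_eq (by
      rw [hcycσ.1.cycleType, hcycσ'.1.cycleType, hcycσ.2, hcycσ'.2])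
    obtain ⟨c, hc⟩ := isConj_iff.mp hconj
    have hmap : Subgroup.map (MulAut.conj c).toMonoidHom H = H := by
      conv_lhs => rw [← hzp σ g.2 horderσ]
      rw [MonoidHom.map_zpowers]
      have : (MulAut.conj c).toMonoidHom σ = σ' := by
        simpa [MulAut.conj] using hc
      rw [this, hzp σ' hσ'H horderσ']
    have hmemN : c ∈ (normalizer (H : Set (Equiv.Perm (Fin p)))) := by
      rw [Subgroup.mem_normalizer_iff]
      intro h
      constructor
      · intro hh
        have : (MulAut.conj c).toMonoidHom h ∈ Subgroup.map (MulAut.conj c).toMonoidHom H :=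
          Subgroup.mem_map_of_mem _ hh
        rw [hmap] at this
        simpa [MulAut.conj] using this
      · intro hh
        have : c * h * c⁻¹ ∈ Subgroup.map (MulAut.conj c).toMonoidHom H := by
          rw [hmap]; exact hh
        obtain ⟨x, hxH, hx⟩ := this
        have hx' : c * x * c⁻¹ = c * h * c⁻¹ := hx
        have : x = h := mul_left_cancel (mul_right_cancel hx')
        rwa [← this]
    refine ⟨⟨c, hmemN⟩, ?_⟩
    have hgen : f ⟨c, hmemN⟩ g = φ g := by
      apply Subtype.ext
      show ((f ⟨c, hmemN⟩ g : H) : Equiv.Perm (Fin p)) = σ'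
      rw [← hc]
      simp [hf, Subgroup.normalizerMonoidHom]
      rfl
    apply MulEquiv.ext
    intro x
    obtain ⟨k, hk⟩ := Subgroup.mem_zpowers_iff.mp (hg x)
    rw [← hk, map_zpow, map_zpow, hgen]
  haveI := hcyc
  have e1 := ((QuotientGroup.quotientMulEquivOfEq hker).symm.trans
    (QuotientGroup.quotientKerEquivOfSurjective f hsurj))
  have hq : Nat.card ((normalizer (H : Set (Equiv.Perm (Fin p)))) ⧸ H.subgroupOf (normalizer (H : Set (Equiv.Perm (Fin p))))) = p - 1 := by
    rw [Nat.card_congr e1.toEquiv, IsCyclic.card_mulAut, hScard, Nat.totient_prime hp.out]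
  refine ⟨?_, hq⟩
  rw [Subgroup.card_eq_card_quotient_mul_card_subgroup (H.subgroupOf (normalizer (H : Set (Equiv.Perm (Fin p))))), hq,
    Nat.card_congr (Subgroup.subgroupOfEquivOfLe H.le_normalizer).toEquiv, hScard, mul_comm]
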